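/- Let (X, ρ) be a CAT(−1) metric space (e.g. a Cartan–Hadamard manifold with sectional curvature K ≤ −1). Let x₁, x₂, x₃ ∈ X, set L₁ = ρ(x₁, x₂), L₂ = ρ(x₂, x₃), and assume L₁ + L₂ > 0. Let x₂′ be the point on the geodesic segment [x₁, x₃] with ρ(x₁, x₂′) = (L₁/(L₁+L₂)) ρ(x₁, x₃). Then cosh(ρ(x₂′, x₂)) ≤ exp(α(L₁ + L₂ − ρ(x₁, x₃))), where α = max(L₁, L₂)/(L₁ + L₂). -/

import Mathlib

/-- A (geodesic) `CAT(-1)` metric space, encoded via the existence of division points on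
geodesic segments together with the hyperbolic comparison inequality
(law-of-cosines form of the `CAT(-1)` condition): for every point `m` on a geodesic
segment from `y` to `z` and every `x`,
`cosh d(x,m) · sinh d(y,z) ≤ cosh d(x,y) · sinh d(m,z) + cosh d(x,z) · sinh d(y,m)`. -/
def IsCATMinusOne (X : Type*) [MetricSpace X] : Prop :=
  (∀ x y : X, ∀ t : ℝ, 0 ≤ t → t ≤ 1 →
    ∃ m : X, dist x m = t * dist x y ∧ dist m y = (1 - t) * dist x y) ∧
  (∀ x y z m : X, dist y m + dist m z = dist y z →
    Real.cosh (dist x m) * Real.sinh (dist y z) ≤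
      Real.cosh (dist x y) * Real.sinh (dist m z) +
        Real.cosh (dist x z) * Real.sinh (dist y m))

lemma key_alg (x y a b : ℝ) (hy : 1 ≤ y) (hxy : y ≤ x) (hb : 1 ≤ b) (hab : b ≤ a) :
    (x*a + (x*a)⁻¹)/2 * ((y - y⁻¹)/2) + (y*b + (y*b)⁻¹)/2 * ((x - x⁻¹)/2)
      ≤ (x*y - (x*y)⁻¹)/2 * a := by
  have hx0 : (0:ℝ) < x := lt_of_lt_of_le one_pos (hy.trans hxy)
  have hy0 : (0:ℝ) < y := lt_of_lt_of_le one_pos hy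
  have ha0 : (0:ℝ) < a := lt_of_lt_of_le one_pos (hb.trans hab)
  have hb0 : (0:ℝ) < b := lt_of_lt_of_le one_pos hb
  rw [← sub_nonneg]
  have h : (x*y - (x*y)⁻¹)/2 * a -
      ((x*a + (x*a)⁻¹)/2 * ((y - y⁻¹)/2) + (y*b + (y*b)⁻¹)/2 * ((x - x⁻¹)/2))
      = (a*b*(a-b)*(x^2*y^2-1) + (a*b-1)*(a*(x^2-1)+b*(y^2-1)))
        / (4*(a*b*x*y)) := by
    field_simp
    ring
  rw [h]
  apply div_nonneg _ (by positivity)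
  have hx1 : 1 ≤ x := hy.trans hxy
  have ha1 : 1 ≤ a := hb.trans hab
  have hx2 : 1 ≤ x^2 := by nlinarith
  have hy2 : 1 ≤ y^2 := by nlinarith
  have hxy2 : 1 ≤ x^2*y^2 := by nlinarith
  have hab1 : 1 ≤ a*b := by nlinarith
  have h1 : 0 ≤ a*b*(a-b)*(x^2*y^2-1) :=
    mul_nonneg (mul_nonneg (by positivity) (by linarith)) (by linarith)
  have h2 : 0 ≤ (a*b-1)*(a*(x^2-1)+b*(y^2-1)) := by
    apply mul_nonneg (by linarith)
    have := mul_nonneg ha0.le (by linarith : (0:ℝ) ≤ x^2-1)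
    have := mul_nonneg hb0.le (by linarith : (0:ℝ) ≤ y^2-1)
    linarith
  linarith

lemma key_sc (s₁ s₂ u v : ℝ) (hs2 : 0 ≤ s₂) (hs : s₂ ≤ s₁) (hv : 0 ≤ v) (huv : v ≤ u) :
    Real.cosh (s₁+u) * Real.sinh s₂ + Real.cosh (s₂+v) * Real.sinh s₁
      ≤ Real.sinh (s₁+s₂) * Real.exp u := by
  have h := key_alg (Real.exp s₁) (Real.exp s₂) (Real.exp u) (Real.exp v)
    (Real.one_le_exp hs2) (Real.exp_le_exp.2 hs)
    (Real.one_le_exp hv) (Real.exp_le_exp.2 huv)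
  simp only [Real.cosh_eq, Real.sinh_eq, Real.exp_neg, Real.exp_add] at *
  linarith

theorem stmt_3 {X : Type*} [MetricSpace X] (hX : IsCATMinusOne X)
    (x₁ x₂ x₃ x₂' : X) (L₁ L₂ : ℝ)
    (hL₁ : L₁ = dist x₁ x₂) (hL₂ : L₂ = dist x₂ x₃) (hpos : 0 < L₁ + L₂)
    (hseg : dist x₁ x₂' + dist x₂' x₃ = dist x₁ x₃)
    (hdiv : dist x₁ x₂' = (L₁ / (L₁ + L₂)) * dist x₁ x₃) :
    Real.cosh (dist x₂' x₂) ≤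
      Real.exp ((max L₁ L₂ / (L₁ + L₂)) * (L₁ + L₂ - dist x₁ x₃)) := by
  obtain ⟨-, hcat⟩ := hX
  have hcosh_exp : ∀ t : ℝ, 0 ≤ t → Real.cosh t ≤ Real.exp t := by
    intro t ht
    rw [Real.cosh_eq]
    have := Real.exp_le_exp.2 (neg_le_self ht)
    linarith
  have hL1n : 0 ≤ L₁ := hL₁ ▸ dist_nonneg
  have hL2n : 0 ≤ L₂ := hL₂ ▸ dist_nonneg
  have hLne : L₁ + L₂ ≠ 0 := ne_of_gt hpos
  set d := dist x₁ x₃ with hdname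
  have hdL : d ≤ L₁ + L₂ := by rw [hL₁, hL₂]; exact dist_triangle _ _ _
  have hdn : (0:ℝ) ≤ d := dist_nonneg
  rcases eq_or_lt_of_le hdn with hd0 | hd
  · -- degenerate case d = 0
    have hd0' : d = 0 := hd0.symm
    have hs1 : dist x₁ x₂' = 0 := by
      have := dist_nonneg (x := x₁) (y := x₂')
      have := dist_nonneg (x := x₂') (y := x₃)
      linarith [hseg, hd0'.symm ▸ hseg]
    have hx21 : x₂' = x₁ := dist_eq_zero.1 (by rw [dist_comm]; exact hs1)
    have hx31 : x₃ = x₁ := dist_eq_zero.1 (by rw [dist_comm]; exact hd0')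
    have hLL : L₂ = L₁ := by rw [hL₂, hL₁, hx31, dist_comm]
    have hL1pos : 0 < L₁ := by linarith
    have harg : max L₁ L₂ / (L₁ + L₂) * (L₁ + L₂ - d) = L₁ := by
      rw [hd0', hLL, max_self]
      field_simp
      ring
    rw [harg, hx21, hL₁, dist_comm]
    exact hcosh_exp _ dist_nonneg
  · -- main case d > 0
    have hC := hcat x₂ x₁ x₃ x₂' hseg
    rw [dist_comm x₂ x₁, ← hL₁, ← hL₂, ← hdname, dist_comm x₂ x₂'] at hC
    set s₁ := dist x₁ x₂' with hs₁name
    set s₂ := dist x₂' x₃ with hs₂name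
    have hs2v : s₂ = L₂ * d / (L₁ + L₂) := by
      have h1 : s₂ = d - L₁ / (L₁ + L₂) * d := by
        have := hseg; rw [hdiv] at this; linarith
      rw [h1]; field_simp; ring
    set u := L₁ * (L₁ + L₂ - d) / (L₁ + L₂) with hu
    set v := L₂ * (L₁ + L₂ - d) / (L₁ + L₂) with hv
    have hun : 0 ≤ u := div_nonneg (mul_nonneg hL1n (by linarith)) hpos.le
    have hvn : 0 ≤ v := div_nonneg (mul_nonneg hL2n (by linarith)) hpos.le
    have hs1u : s₁ + u = L₁ := by rw [hdiv, hu]; field_simp; ring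
    have hs2v' : s₂ + v = L₂ := by rw [hs2v, hv]; field_simp; ring
    have hs12 : s₁ + s₂ = d := hseg
    have hs1n : 0 ≤ s₁ := dist_nonneg
    have hs2n : 0 ≤ s₂ := dist_nonneg
    have hsd : 0 < Real.sinh d := Real.sinh_pos_iff.2 hd
    rcases le_total L₂ L₁ with hcase | hcase
    · -- L₂ ≤ L₁
      have hs21 : s₂ ≤ s₁ := by
        rw [hs2v, hdiv]
        rw [div_mul_eq_mul_div]
        gcongr
      have huv : v ≤ u := by
        rw [hu, hv]
        exact (div_le_div_iff_of_pos_right hpos).2 (mul_le_mul_of_nonneg_right hcase (by linarith))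
      have hk := key_sc s₁ s₂ u v hs2n hs21 hvn huv
      rw [hs1u, hs2v', hs12] at hk
      have harg : max L₁ L₂ / (L₁ + L₂) * (L₁ + L₂ - d) = u := by
        rw [max_eq_left hcase, hu]; ring
      rw [harg]
      have hfin : Real.cosh (dist x₂' x₂) * Real.sinh d ≤ Real.exp u * Real.sinh d := by
        calc Real.cosh (dist x₂' x₂) * Real.sinh d
            ≤ Real.cosh L₁ * Real.sinh s₂ + Real.cosh L₂ * Real.sinh s₁ := hC
          _ ≤ Real.sinh d * Real.exp u := hk
          _ = Real.exp u * Real.sinh d := by ring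
      exact (mul_le_mul_iff_left₀ hsd).1 hfin
    · -- L₁ ≤ L₂
      have hs21 : s₁ ≤ s₂ := by
        rw [hs2v, hdiv]
        rw [div_mul_eq_mul_div]
        gcongr
      have huv : u ≤ v := by
        rw [hu, hv]
        exact (div_le_div_iff_of_pos_right hpos).2 (mul_le_mul_of_nonneg_right hcase (by linarith))
      have hk := key_sc s₂ s₁ v u hs1n hs21 hun huv
      rw [hs1u, hs2v'] at hk
      rw [show s₂ + s₁ = d by linarith] at hk
      have harg : max L₁ L₂ / (L₁ + L₂) * (L₁ + L₂ - d) = v := by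
        rw [max_eq_right hcase, hv]; ring
      rw [harg]
      have hfin : Real.cosh (dist x₂' x₂) * Real.sinh d ≤ Real.exp v * Real.sinh d := by
        calc Real.cosh (dist x₂' x₂) * Real.sinh d
            ≤ Real.cosh L₁ * Real.sinh s₂ + Real.cosh L₂ * Real.sinh s₁ := hC
          _ ≤ Real.sinh d * Real.exp v := by linarith [hk]
          _ = Real.exp v * Real.sinh d := by ring
      exact (mul_le_mul_iff_left₀ hsd).1 hfin
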